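/- Let F be a field, q ∈ F, and s, t ≥ 1 natural numbers with q + 1 ≠ 0 and q²(s−1)(t−1) − 1 ≠ 0 in F. Let w be any vertex in the Y-part of K_{s,t}. Then ∑_{u} (1 + q + (q² − 1)·D(u,w))·x(u) = q + 1, where the sum runs over all vertices u of K_{s,t}, D is the q-distance matrix of K_{s,t}, and x is the vector defined in the context. -/

import Mathlib

/-- The `q`-distance matrix of the complete bipartite graph `K_{s,t}`,
indexed by `Fin s ⊕ Fin t`: diagonal entries are `0`, entries between the two
parts are `1`, and off-diagonal entries within a part are `q + 1`. -/
def qDistKst (F : Type*) [Field F] (q : F) (s t : ℕ) :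
    Matrix (Fin s ⊕ Fin t) (Fin s ⊕ Fin t) F :=
  Matrix.of fun u v =>
    if u = v then 0 else if u.isLeft = v.isLeft then q + 1 else 1

/-- The special vector `x` of `K_{s,t}`. -/
def xVecKst (F : Type*) [Field F] (q : F) (s t : ℕ) :
    Fin s ⊕ Fin t → F :=
  Sum.elim
    (fun _ => (q * ((t : F) - 1) - 1) /
      ((q + 1) * (q ^ 2 * ((s : F) - 1) * ((t : F) - 1) - 1)))
    (fun _ => (q * ((s : F) - 1) - 1) /
      ((q + 1) * (q ^ 2 * ((s : F) - 1) * ((t : F) - 1) - 1)))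

theorem sum_qdist_x_eq_q_add_one (F : Type*) [Field F] (q : F)
    (s t : ℕ) (hs : 1 ≤ s) (ht : 1 ≤ t) (hq : q + 1 ≠ 0)
    (hΔ : q ^ 2 * ((s : F) - 1) * ((t : F) - 1) - 1 ≠ 0) (w : Fin t) :
    ∑ u, (1 + q + (q ^ 2 - 1) * qDistKst F q s t u (Sum.inr w)) * xVecKst F q s t u
      = q + 1 := by
  set xL : F := (q * ((t : F) - 1) - 1) /
      ((q + 1) * (q ^ 2 * ((s : F) - 1) * ((t : F) - 1) - 1)) with hxL
  set xR : F := (q * ((s : F) - 1) - 1) /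
      ((q + 1) * (q ^ 2 * ((s : F) - 1) * ((t : F) - 1) - 1)) with hxR
  rw [Fintype.sum_sum_type]
  have h1 : ∀ i : Fin s,
      (1 + q + (q ^ 2 - 1) * qDistKst F q s t (Sum.inl i) (Sum.inr w)) *
        xVecKst F q s t (Sum.inl i) = (1 + q + (q ^ 2 - 1)) * xL := by
    intro i
    simp [qDistKst, xVecKst, hxL]
  rw [Finset.sum_congr rfl (fun i _ => h1 i), Finset.sum_const, Finset.card_univ,
    Fintype.card_fin]
  rw [← Finset.add_sum_erase _ _ (Finset.mem_univ w)]
  have h2 : (1 + q + (q ^ 2 - 1) * qDistKst F q s t (Sum.inr w) (Sum.inr w)) *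
      xVecKst F q s t (Sum.inr w) = (1 + q) * xR := by
    simp [qDistKst, xVecKst, hxR]
  have h3 : ∀ j ∈ Finset.univ.erase w,
      (1 + q + (q ^ 2 - 1) * qDistKst F q s t (Sum.inr j) (Sum.inr w)) *
        xVecKst F q s t (Sum.inr j) = (1 + q + (q ^ 2 - 1) * (q + 1)) * xR := by
    intro j hj
    have hjw : j ≠ w := Finset.ne_of_mem_erase hj
    simp [qDistKst, xVecKst, hjw, hxR]
  rw [h2, Finset.sum_congr rfl h3, Finset.sum_const, Finset.card_erase_of_mem
    (Finset.mem_univ w), Finset.card_univ, Fintype.card_fin]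
  have hsF : ((s : ℕ) : F) = (s : F) := rfl
  have htc : ((t - 1 : ℕ) : F) = (t : F) - 1 := by
    push_cast [Nat.cast_sub ht]; ring
  rw [nsmul_eq_mul, nsmul_eq_mul, htc, hxL, hxR]
  field_simp
  rw [div_eq_iff (by intro h; apply hΔ; linear_combination h)]
  ring
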